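/- Let L/K be a finite Galois extension with group G. The map Γ ↦ L⋊Gal(L/Γ) is a bijection from the set of intermediate fields Γ with Γ/K Galois to the set of G-conjugation-stable K-subalgebras of End_K(L) containing L; equivalently, the G-stable subalgebras containing L are exactly the L⋊N for N a normal subgroup of G, and every normal subgroup of G is of the form Gal(L/Γ) for a unique Galois intermediate field Γ. -/

import Mathlib

open Module

namespace Stmt19

variable {K L : Type} [Field K] [Field L] [Algebra K L]

/-- `j g` is the endomorphism attached to `g`. -/
@[reducible] noncomputable def j (g : L ≃ₐ[K] L) : Module.End K L := g.toLinearMap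

lemma j_apply (g : L ≃ₐ[K] L) (y : L) : j g y = g y := rfl

lemma j_one : j (1 : L ≃ₐ[K] L) = 1 := rfl

lemma j_mul (g h : L ≃ₐ[K] L) : j (g * h) = j g * j h := rfl

lemma j_inv (g : L ≃ₐ[K] L) : j g⁻¹ = g.symm.toLinearMap := rfl

/-- left multiplication -/
noncomputable def lam (x : L) : Module.End K L := Algebra.lmul K L x

lemma lam_apply (x y : L) : lam (K := K) x y = x * y := rfl

lemma lam_mul (x : L) (a : Module.End K L) : lam x * a = x • a := by
  ext y; simp [lam, Module.End.mul_apply, smul_eq_mul]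

lemma j_mul_lam (g : L ≃ₐ[K] L) (x : L) : j g * lam x = g x • j g := by
  ext y
  simp [j, lam, Module.End.mul_apply, map_mul, smul_eq_mul, mul_assoc]

lemma smul_mul (x : L) (a c : Module.End K L) : (x • a) * c = x • (a * c) := by
  ext y; simp [Module.End.mul_apply, smul_eq_mul]

lemma li : LinearIndependent L (j (K := K) (L := L)) := by
  have h := (linearIndependent_toLinearMap K L L).comp
    (fun g : L ≃ₐ[K] L => (g : L →ₐ[K] L)) (fun a b hab => by
      ext x; exact DFunLike.congr_fun hab x)
  exact h

lemma finrank_end [FiniteDimensional K L] :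
    finrank L (Module.End K L) = finrank K L := by
  let bK := Module.finBasis K L
  rw [← (bK.constr L (M' := L)).finrank_eq, Module.finrank_fin_fun]

variable [FiniteDimensional K L] [IsGalois K L]

noncomputable def bG : Basis (L ≃ₐ[K] L) L (Module.End K L) :=
  basisOfLinearIndependentOfCardEqFinrank li
    (by rw [finrank_end, ← Nat.card_eq_fintype_card, IsGalois.card_aut_eq_finrank])

lemma bG_apply (g : L ≃ₐ[K] L) : bG g = j g := by
  simp [bG]


lemma repr_lam_mul (x : L) (φ : Module.End K L) (g : L ≃ₐ[K] L) :
    bG.repr (lam x * φ) g = x * bG.repr φ g := by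
  rw [lam_mul, map_smul]; rfl

noncomputable def Rx (x : L) : Module.End K L →ₗ[L] Module.End K L where
  toFun a := a * lam x
  map_add' a b := add_mul a b (lam x)
  map_smul' c a := smul_mul c a (lam x)

lemma repr_mul_lam (φ : Module.End K L) (x : L) (g : L ≃ₐ[K] L) :
    bG.repr (φ * lam x) g = bG.repr φ g * g x := by
  have key : (Finsupp.lapply g).comp ((bG.repr.toLinearMap).comp (Rx x)) =
      g x • ((Finsupp.lapply g).comp bG.repr.toLinearMap) := by
    apply bG.ext
    intro h
    have h1 : Rx x (bG h) = h x • bG h := by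
      show bG h * lam x = h x • bG h
      rw [bG_apply, j_mul_lam]
    simp only [LinearMap.comp_apply, LinearMap.smul_apply, h1, map_smul,
      LinearEquiv.coe_toLinearMap, Basis.repr_self, Finsupp.lapply_apply, Finsupp.smul_apply]
    by_cases hg : h = g
    · subst hg; simp
    · simp [Finsupp.single_apply, hg]
  have h2 := DFunLike.congr_fun key φ
  simp only [LinearMap.comp_apply, LinearMap.smul_apply, LinearEquiv.coe_toLinearMap,
    Finsupp.lapply_apply, smul_eq_mul] at h2
  rw [show (Rx x) φ = φ * lam x from rfl] at h2
  rw [h2, mul_comm]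

lemma smul_mem_of {A : Subalgebra K (Module.End K L)}
    (hA : (Algebra.lmul K L).range ≤ A) {φ : Module.End K L} (hφ : φ ∈ A) (x : L) :
    x • φ ∈ A := by
  rw [← lam_mul]
  exact mul_mem (hA ⟨x, rfl⟩) hφ

lemma key (A : Subalgebra K (Module.End K L)) (hA : (Algebra.lmul K L).range ≤ A) :
    ∀ (n : ℕ) (φ : Module.End K L), φ ∈ A → ((bG.repr φ).support).card ≤ n →
      ∀ g0 ∈ (bG.repr φ).support, j g0 ∈ A := by
  classical
  intro n
  induction n with
  | zero =>
    intro φ _ hcard g0 hg0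
    rw [Nat.le_zero, Finset.card_eq_zero] at hcard
    rw [hcard] at hg0
    exact absurd hg0 (Finset.notMem_empty _)
  | succ n ih =>
    intro φ hφ hcard g0 hg0
    by_cases hsingle : (bG.repr φ).support ⊆ {g0}
    · -- φ = c • bG g0 with c ≠ 0
      have hc : bG.repr φ g0 ≠ 0 := Finsupp.mem_support_iff.mp hg0
      obtain ⟨c, hc'⟩ := Finsupp.support_subset_singleton'.mp hsingle
      have hc0 : c ≠ 0 := by
        intro h
        apply hc
        rw [hc', h]
        simp
      have hφ2 : φ = c • bG g0 := by
        apply bG.repr.injective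
        rw [map_smul, Basis.repr_self, Finsupp.smul_single, smul_eq_mul, mul_one, hc']
      have hj : j g0 = c⁻¹ • φ := by
        rw [hφ2, smul_smul, inv_mul_cancel₀ hc0, one_smul, bG_apply]
      rw [hj]
      exact smul_mem_of hA hφ _
    · -- pick g1 in the support different from g0 and kill it
      rw [Finset.not_subset] at hsingle
      obtain ⟨g1, hg1, hg1'⟩ := hsingle
      rw [Finset.mem_singleton] at hg1'
      have hne : g0 ≠ g1 := fun h => hg1' (h ▸ rfl)
      obtain ⟨x, hx⟩ : ∃ x : L, g0 x ≠ g1 x := by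
        by_contra hcon
        push_neg at hcon
        exact hne (AlgEquiv.ext hcon)
      set ψ := φ * lam x - g1 x • φ with hψdef
      have hψA : ψ ∈ A := sub_mem (mul_mem hφ (hA ⟨x, rfl⟩)) (smul_mem_of hA hφ _)
      have hrepr : ∀ g : L ≃ₐ[K] L, bG.repr ψ g = bG.repr φ g * (g x - g1 x) := by
        intro g
        rw [hψdef, map_sub, Finsupp.sub_apply, repr_mul_lam, map_smul, Finsupp.smul_apply,
          smul_eq_mul, mul_sub, mul_comm (g1 x)]
      have hsub : (bG.repr ψ).support ⊆ (bG.repr φ).support.erase g1 := by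
        intro g hg
        rw [Finsupp.mem_support_iff, hrepr] at hg
        rw [Finset.mem_erase, Finsupp.mem_support_iff]
        refine ⟨fun h => hg (by rw [h]; simp), left_ne_zero_of_mul hg⟩
      have hcard2 : (bG.repr ψ).support.card ≤ n := by
        calc (bG.repr ψ).support.card ≤ ((bG.repr φ).support.erase g1).card :=
              Finset.card_le_card hsub
          _ ≤ (bG.repr φ).support.card - 1 := by
              rw [Finset.card_erase_of_mem hg1]
          _ ≤ n := by omega
      have hg0ψ : g0 ∈ (bG.repr ψ).support := by
        rw [Finsupp.mem_support_iff, hrepr]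
        exact mul_ne_zero (Finsupp.mem_support_iff.mp hg0) (sub_ne_zero_of_ne hx)
      exact ih ψ hψA hcard2 g0 hg0ψ

lemma mul_mem_span (N : Subgroup (L ≃ₐ[K] L)) (a b : Module.End K L)
    (ha : a ∈ Submodule.span L (j '' (N : Set (L ≃ₐ[K] L))))
    (hb : b ∈ Submodule.span L (j '' (N : Set (L ≃ₐ[K] L)))) :
    a * b ∈ Submodule.span L (j '' (N : Set (L ≃ₐ[K] L))) := by
  have main : ∀ g ∈ N, ∀ c ∈ Submodule.span L (j '' (N : Set (L ≃ₐ[K] L))),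
      j g * c ∈ Submodule.span L (j '' (N : Set (L ≃ₐ[K] L))) := by
    intro g hg c hc
    induction hc using Submodule.span_induction with
    | mem y hy =>
      obtain ⟨h, hh, rfl⟩ := hy
      rw [← j_mul]
      exact Submodule.subset_span ⟨g * h, mul_mem hg hh, rfl⟩
    | zero => simpa using Submodule.zero_mem _
    | add y z _ _ hy hz => rw [mul_add]; exact Submodule.add_mem _ hy hz
    | smul x y _ hy =>
      have hsm : j g * (x • y) = g x • (j g * y) := by
        ext t
        simp [j, Module.End.mul_apply, smul_eq_mul, map_mul, mul_assoc]
      rw [hsm]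
      exact Submodule.smul_mem _ _ hy
  induction ha using Submodule.span_induction with
  | mem y hy =>
    obtain ⟨g, hg, rfl⟩ := hy
    exact main g hg b hb
  | zero => simpa using Submodule.zero_mem _
  | add y z _ _ hy hz => rw [add_mul]; exact Submodule.add_mem _ hy hz
  | smul x y _ hy => rw [smul_mul]; exact Submodule.smul_mem _ _ hy

/-- `L⋊N` as a subalgebra. -/
noncomputable def LN (N : Subgroup (L ≃ₐ[K] L)) : Subalgebra K (Module.End K L) :=
  ((Submodule.span L (j '' (N : Set (L ≃ₐ[K] L)))).restrictScalars K).toSubalgebra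
    (by
      rw [Submodule.restrictScalars_mem, ← j_one]
      exact Submodule.subset_span ⟨1, one_mem N, rfl⟩)
    (fun a b ha hb => mul_mem_span N a b ha hb)

lemma mem_LN {N : Subgroup (L ≃ₐ[K] L)} {φ : Module.End K L} :
    φ ∈ LN N ↔ φ ∈ Submodule.span L (j '' (N : Set (L ≃ₐ[K] L))) := Iff.rfl

lemma coe_LN (N : Subgroup (L ≃ₐ[K] L)) :
    (LN N : Set (Module.End K L)) =
      (Submodule.span L (j '' (N : Set (L ≃ₐ[K] L))) : Submodule L (Module.End K L)) := rfl

lemma mem_LN_iff {N : Subgroup (L ≃ₐ[K] L)} {φ : Module.End K L} :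
    φ ∈ LN N ↔ ((bG.repr φ).support : Set (L ≃ₐ[K] L)) ⊆ (N : Set (L ≃ₐ[K] L)) := by
  have himg : j '' (N : Set (L ≃ₐ[K] L)) = ⇑bG '' (N : Set (L ≃ₐ[K] L)) := by
    apply Set.image_congr
    intro g _
    exact (bG_apply g).symm
  show φ ∈ Submodule.span L (j '' (N : Set (L ≃ₐ[K] L))) ↔ _
  rw [himg, Basis.mem_span_image]

lemma j_mem_LN_iff {N : Subgroup (L ≃ₐ[K] L)} {g : L ≃ₐ[K] L} : j g ∈ LN N ↔ g ∈ N := by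
  classical
  rw [mem_LN_iff, ← bG_apply, Basis.repr_self, Finsupp.support_single_ne_zero _ one_ne_zero]
  simp

/-- The subgroup attached to a subalgebra. -/
noncomputable def NA (A : Subalgebra K (Module.End K L)) (hA : (Algebra.lmul K L).range ≤ A) :
    Subgroup (L ≃ₐ[K] L) where
  carrier := {g | j g ∈ A}
  one_mem' := by rw [Set.mem_setOf_eq, j_one]; exact one_mem A
  mul_mem' {a b} ha hb := by rw [Set.mem_setOf_eq, j_mul]; exact mul_mem ha hb
  inv_mem' {g} hg := by
    have hord : 0 < orderOf g := orderOf_pos g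
    have h1 : g⁻¹ = g ^ (orderOf g - 1) := by
      apply inv_eq_of_mul_eq_one_right
      rw [← pow_succ']
      rw [Nat.sub_add_cancel hord]
      exact pow_orderOf_eq_one g
    have hpow : ∀ m : ℕ, j (g ^ m) ∈ A := by
      intro m
      induction m with
      | zero => rw [pow_zero, j_one]; exact one_mem A
      | succ m ih => rw [pow_succ, j_mul]; exact mul_mem ih hg
    rw [Set.mem_setOf_eq, h1]
    exact hpow _

lemma mem_NA_iff {A : Subalgebra K (Module.End K L)} {hA : (Algebra.lmul K L).range ≤ A}
    {g : L ≃ₐ[K] L} : g ∈ NA A hA ↔ j g ∈ A := Iff.rfl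

lemma A_eq_LN (A : Subalgebra K (Module.End K L)) (hA : (Algebra.lmul K L).range ≤ A) :
    A = LN (NA A hA) := by
  apply le_antisymm
  · intro φ hφ
    rw [mem_LN_iff]
    intro g hg
    exact key A hA _ φ hφ le_rfl g hg
  · intro φ hφ
    rw [mem_LN] at hφ
    induction hφ using Submodule.span_induction with
    | mem y hy => obtain ⟨g, hg, rfl⟩ := hy; exact hg
    | zero => exact zero_mem A
    | add y z _ _ hy hz => exact add_mem hy hz
    | smul x y _ hy => exact smul_mem_of hA hy x

lemma LN_inj {N M : Subgroup (L ≃ₐ[K] L)} (h : LN N = LN M) : N = M := by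
  ext g
  constructor
  · intro hg
    rw [← j_mem_LN_iff, ← h]
    exact j_mem_LN_iff.mpr hg
  · intro hg
    rw [← j_mem_LN_iff, h]
    exact j_mem_LN_iff.mpr hg

lemma conj_j (h g : L ≃ₐ[K] L) :
    j h * j g * h.symm.toLinearMap = j (h * g * h⁻¹) := by
  rw [← j_inv, ← j_mul, ← j_mul]

lemma conj_smul (h : L ≃ₐ[K] L) (x : L) (a : Module.End K L) :
    j h * (x • a) = h x • (j h * a) := by
  ext y
  simp [j, Module.End.mul_apply, smul_eq_mul, map_mul]

lemma gstable_LN (N : Subgroup (L ≃ₐ[K] L)) (hN : N.Normal) (h : L ≃ₐ[K] L)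
    (a : Module.End K L) (ha : a ∈ LN N) :
    h.toLinearMap * a * h.symm.toLinearMap ∈ LN N := by
  rw [mem_LN] at ha ⊢
  show j h * a * h.symm.toLinearMap ∈ _
  induction ha using Submodule.span_induction with
  | mem y hy =>
    obtain ⟨g, hg, rfl⟩ := hy
    rw [conj_j]
    exact Submodule.subset_span ⟨h * g * h⁻¹, hN.conj_mem g hg h, rfl⟩
  | zero => simpa using Submodule.zero_mem _
  | add y z _ _ hy hz => rw [mul_add, add_mul]; exact Submodule.add_mem _ hy hz
  | smul x y _ hy =>
    rw [conj_smul, smul_mul]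
    exact Submodule.smul_mem _ _ hy

lemma NA_normal (A : Subalgebra K (Module.End K L)) (hA : (Algebra.lmul K L).range ≤ A)
    (hG : ∀ g : L ≃ₐ[K] L, ∀ a ∈ A,
      (g.toLinearMap : Module.End K L) * a * (g.symm.toLinearMap : Module.End K L) ∈ A) :
    (NA A hA).Normal := by
  constructor
  intro g hg h
  have h2 := hG h (j g) hg
  rw [mem_NA_iff, ← conj_j]
  exact h2

variable (K L) in
/-- The subalgebra attached to an intermediate field. -/
noncomputable def Fdef (Γ : IntermediateField K L) : Subalgebra K (Module.End K L) :=
  Algebra.adjoin K (Set.range (Algebra.lmul K L) ∪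
    (fun g : L ≃ₐ[K] L => (g.toLinearMap : Module.End K L)) ''
      (Γ.fixingSubgroup : Set (L ≃ₐ[K] L)))

lemma F_eq (Γ : IntermediateField K L) : Fdef K L Γ = LN Γ.fixingSubgroup := by
  apply le_antisymm
  · apply Algebra.adjoin_le
    rintro a (⟨x, rfl⟩ | ⟨g, hg, rfl⟩)
    · rw [SetLike.mem_coe, mem_LN]
      have h0 : Algebra.lmul K L x = x • j (1 : L ≃ₐ[K] L) := by
        ext y
        rfl
      rw [h0]
      exact Submodule.smul_mem _ _ (Submodule.subset_span ⟨1, one_mem _, rfl⟩)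
    · exact Submodule.subset_span ⟨g, hg, rfl⟩
  · intro φ hφ
    rw [mem_LN] at hφ
    induction hφ using Submodule.span_induction with
    | mem y hy =>
      obtain ⟨g, hg, rfl⟩ := hy
      exact Algebra.subset_adjoin (Or.inr ⟨g, hg, rfl⟩)
    | zero => exact zero_mem _
    | add y z _ _ hy hz => exact add_mem hy hz
    | smul x y _ hy =>
      rw [← lam_mul]
      exact mul_mem (Algebra.subset_adjoin (Or.inl ⟨x, rfl⟩)) hy

theorem part1 (Γ : IntermediateField K L) (hGal : IsGalois K Γ) :
    (Algebra.lmul K L).range ≤ Fdef K L Γ ∧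
      ∀ g : L ≃ₐ[K] L, ∀ a ∈ Fdef K L Γ,
        (g.toLinearMap : Module.End K L) * a * (g.symm.toLinearMap : Module.End K L) ∈
          Fdef K L Γ := by
  haveI := hGal
  have hFe : Fdef K L Γ = LN Γ.fixingSubgroup := F_eq Γ
  constructor
  · intro a ha
    obtain ⟨x, rfl⟩ := ha
    exact Algebra.subset_adjoin (Or.inl ⟨x, rfl⟩)
  · intro g a ha
    rw [hFe] at ha ⊢
    exact gstable_LN _ inferInstance g a ha

theorem part2 (A : Subalgebra K (Module.End K L)) (hA : (Algebra.lmul K L).range ≤ A)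
    (hG : ∀ g : L ≃ₐ[K] L, ∀ a ∈ A,
      (g.toLinearMap : Module.End K L) * a * (g.symm.toLinearMap : Module.End K L) ∈ A) :
    ∃! Γ : IntermediateField K L, IsGalois K Γ ∧ Fdef K L Γ = A := by
  haveI hnorm : (NA A hA).Normal := NA_normal A hA hG
  refine ⟨IntermediateField.fixedField (NA A hA), ⟨inferInstance, ?_⟩, ?_⟩
  · rw [F_eq, IntermediateField.fixingSubgroup_fixedField, ← A_eq_LN]
  · rintro Γ ⟨hGal, hFΓ⟩
    haveI := hGal
    have h1 : LN Γ.fixingSubgroup = LN (NA A hA) := by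
      rw [← F_eq, hFΓ]
      exact A_eq_LN A hA
    have h2 : Γ.fixingSubgroup = NA A hA := LN_inj h1
    rw [← IsGalois.fixedField_fixingSubgroup Γ, h2]

theorem part3 (A : Subalgebra K (Module.End K L)) (hA : (Algebra.lmul K L).range ≤ A) :
    (∀ g : L ≃ₐ[K] L, ∀ a ∈ A,
        (g.toLinearMap : Module.End K L) * a * (g.symm.toLinearMap : Module.End K L) ∈ A) ↔
      ∃ N : Subgroup (L ≃ₐ[K] L), N.Normal ∧
        (A : Set (Module.End K L)) =
          (Submodule.span L ((fun g : L ≃ₐ[K] L => (g.toLinearMap : Module.End K L)) ''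
              (N : Set (L ≃ₐ[K] L))) :
            Submodule L (Module.End K L)) := by
  constructor
  · intro hG
    refine ⟨NA A hA, NA_normal A hA hG, ?_⟩
    exact (congrArg (fun S : Subalgebra K (Module.End K L) => (S : Set (Module.End K L)))
      (A_eq_LN A hA)).trans (coe_LN _)
  · rintro ⟨N, hN, hset⟩ g a ha
    have hALN : A = LN N := SetLike.ext' (hset.trans (coe_LN N).symm)
    rw [hALN] at ha ⊢
    exact gstable_LN N hN g a ha

theorem part4 (N : Subgroup (L ≃ₐ[K] L)) (hN : N.Normal) :
    ∃! Γ : IntermediateField K L, IsGalois K Γ ∧ Γ.fixingSubgroup = N := by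
  haveI := hN
  refine ⟨IntermediateField.fixedField N,
    ⟨inferInstance, IntermediateField.fixingSubgroup_fixedField N⟩, ?_⟩
  rintro Γ ⟨hGal, hfix⟩
  haveI := hGal
  rw [← IsGalois.fixedField_fixingSubgroup Γ, hfix]

end Stmt19

/-- Let `L/K` be a finite Galois extension with group `G`, inside `E = End_K(L) = L⋊G`.
The map `Γ ↦ L⋊Gal(L/Γ)` is a bijection from the Galois intermediate fields onto the
`G`-conjugation-stable `K`-subalgebras of `E` containing `L`; equivalently, the `G`-stable
subalgebras containing `L` are exactly the `L⋊N` for `N ⊴ G` normal, and every normal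
subgroup of `G` is `Gal(L/Γ)` for a unique Galois intermediate field `Γ`. -/
theorem stmt19 (K L : Type) [Field K] [Field L] [Algebra K L] [FiniteDimensional K L]
    [IsGalois K L] :
    letI F : IntermediateField K L → Subalgebra K (Module.End K L) := fun Γ =>
      Algebra.adjoin K (Set.range (Algebra.lmul K L) ∪
        (fun g : L ≃ₐ[K] L => (g.toLinearMap : Module.End K L)) ''
          (Γ.fixingSubgroup : Set (L ≃ₐ[K] L)))
    letI Gstable : Subalgebra K (Module.End K L) → Prop := fun A =>
      ∀ g : L ≃ₐ[K] L, ∀ a ∈ A,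
        (g.toLinearMap : Module.End K L) * a * (g.symm.toLinearMap : Module.End K L) ∈ A
    -- the map is well defined on Galois intermediate fields
    (∀ Γ : IntermediateField K L, IsGalois K Γ →
        (Algebra.lmul K L).range ≤ F Γ ∧ Gstable (F Γ)) ∧
    -- it is a bijection onto the `G`-stable subalgebras containing `L`
    (∀ A : Subalgebra K (Module.End K L), (Algebra.lmul K L).range ≤ A → Gstable A →
        ∃! Γ : IntermediateField K L, IsGalois K Γ ∧ F Γ = A) ∧
    -- the `G`-stable subalgebras containing `L` are exactly the `L⋊N`, `N ⊴ G`
    (∀ A : Subalgebra K (Module.End K L), (Algebra.lmul K L).range ≤ A →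
        (Gstable A ↔ ∃ N : Subgroup (L ≃ₐ[K] L), N.Normal ∧
          (A : Set (Module.End K L)) =
            (Submodule.span L ((fun g : L ≃ₐ[K] L => (g.toLinearMap : Module.End K L)) ''
                (N : Set (L ≃ₐ[K] L))) :
              Submodule L (Module.End K L)))) ∧
    -- every normal subgroup is `Gal(L/Γ)` for a unique Galois intermediate field `Γ`
    (∀ N : Subgroup (L ≃ₐ[K] L), N.Normal →
        ∃! Γ : IntermediateField K L, IsGalois K Γ ∧ Γ.fixingSubgroup = N) := by
  exact ⟨fun Γ hΓ => Stmt19.part1 Γ hΓ, fun A hA hG => Stmt19.part2 A hA hG,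
    fun A hA => Stmt19.part3 A hA, fun N hN => Stmt19.part4 N hN⟩
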